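/- arXiv:1403.5532 — 4 statements merged into one kernel-verified Lean document; each statement's English description precedes it below -/
import Mathlib

section
/- If f : [0,∞) → ℝ ∪ {+∞} is bounded from below and satisfies f(x) ≥ c·log x for some c > 0 and all sufficiently large x, then for any bounded g : [0,∞) → ℝ and any α > 0, there exist constants C, M, m₀ > 0 such that for all m ≥ m₀ and all n ≥ 1, |Σ_{k=0}^∞ e^{-m f(k/n^α)} g(k/n^α)| ≤ C · n^M · e^{-m f̄}, where f̄ = inf_{x ≥ 0} f(x). -/
open Real Filter

set_option maxHeartbeats 2000000 in

theorem admissibility_criterion (f g : ℝ → ℝ) (B G c x₁ : ℝ) (hc : 0 < c)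
    (hbd : ∀ x : ℝ, 0 ≤ x → B ≤ f x)
    (hlog : ∀ x : ℝ, x₁ ≤ x → c * Real.log x ≤ f x)
    (hg : ∀ x : ℝ, 0 ≤ x → |g x| ≤ G)
    (α : ℝ) (hα : 0 < α) :
    ∃ C M m₀ : ℝ, 0 < C ∧ 0 < M ∧ 0 < m₀ ∧
      ∀ m : ℝ, m₀ ≤ m → ∀ n : ℕ, 1 ≤ n →
        |∑' k : ℕ, Real.exp (-m * f ((k : ℝ) / (n : ℝ) ^ α)) * g ((k : ℝ) / (n : ℝ) ^ α)|
          ≤ C * (n : ℝ) ^ M * Real.exp (-m * sInf (f '' Set.Ici 0)) := by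
  set fbar := sInf (f '' Set.Ici 0) with hfbar
  have hne : (f '' Set.Ici 0).Nonempty := ⟨f 0, 0, Set.mem_Ici.2 le_rfl, rfl⟩
  have hbdd : BddBelow (f '' Set.Ici 0) := by
    refine ⟨B, ?_⟩; rintro y ⟨x, hx, rfl⟩; exact hbd x hx
  have hfbar_le : ∀ x : ℝ, 0 ≤ x → fbar ≤ f x := fun x hx => csInf_le hbdd ⟨x, hx, rfl⟩
  set x₂ : ℝ := max x₁ 1 with hx₂
  have hx₂1 : (1:ℝ) ≤ x₂ := le_max_right _ _
  set m₀ : ℝ := max (2/c) 1 with hm₀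
  have hm₀pos : (0:ℝ) < m₀ := lt_of_lt_of_le one_pos (le_max_right _ _)
  have hm₀c : 2 ≤ m₀ * c := by
    have : 2/c ≤ m₀ := le_max_left _ _
    calc (2:ℝ) = (2/c) * c := by field_simp
    _ ≤ m₀ * c := by nlinarith
  set A : ℝ := (x₂+1)^2 + 4 * Real.exp (m₀ * fbar) with hA
  have hApos : 0 < A := by positivity
  have hSsum : Summable (fun k:ℕ => 1/((k:ℝ)+1)^2) := by
    have := Real.summable_one_div_nat_pow (p := 2) |>.2 (by norm_num)
    exact_mod_cast (summable_nat_add_iff 1).2 this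
  set S : ℝ := ∑' k:ℕ, 1/((k:ℝ)+1)^2 with hS
  have hSpos : 0 < S := by
    have h0 : (0:ℝ) < 1/(((0:ℕ):ℝ)+1)^2 := by norm_num
    exact Summable.tsum_pos hSsum (fun k => by positivity) 0 h0
  have hG : 0 ≤ G := le_trans (abs_nonneg _) (hg 0 le_rfl)
  refine ⟨G*A*S+1, 2*α, m₀, by positivity, by positivity, hm₀pos, ?_⟩
  intro m hm n hn
  have hm1 : (1:ℝ) ≤ m := le_trans (le_max_right _ _) hm
  set N : ℝ := (n:ℝ)^α with hN
  have hN1 : (1:ℝ) ≤ N := Real.one_le_rpow (by exact_mod_cast hn) hα.le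
  have hNpos : 0 < N := lt_of_lt_of_le one_pos hN1
  have hN2 : N^2 = (n:ℝ)^(2*α) := by
    rw [hN, ← Real.rpow_natCast ((n:ℝ)^α) 2, ← Real.rpow_mul (by positivity)]
    norm_num [mul_comm]
  -- key pointwise bound
  have key : ∀ k:ℕ, |Real.exp (-m * f ((k:ℝ)/N)) * g ((k:ℝ)/N)|
      ≤ (G * A * (n:ℝ)^(2*α) / ((k:ℝ)+1)^2) * Real.exp (-m * fbar) := by
    intro k
    set x : ℝ := (k:ℝ)/N with hx
    have hx0 : 0 ≤ x := by positivity
    have hfb : fbar ≤ f x := hfbar_le x hx0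
    have habs : |Real.exp (-m * f x) * g x| ≤ G * Real.exp (-m * f x) := by
      rw [abs_mul, abs_of_pos (Real.exp_pos _), mul_comm]
      exact mul_le_mul_of_nonneg_right (hg x hx0) (Real.exp_pos _).le
    rcases lt_or_ge x x₂ with hcase | hcase
    · -- head
      have he : Real.exp (-m * f x) ≤ Real.exp (-m * fbar) := by
        apply Real.exp_le_exp.2; nlinarith
      have hkx : x * N = (k:ℝ) := div_mul_cancel₀ _ hNpos.ne'
      have hk : (k:ℝ)+1 ≤ (x₂+1) * N := by nlinarith
      have hk2 : ((k:ℝ)+1)^2 ≤ (x₂+1)^2 * (n:ℝ)^(2*α) := by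
        rw [← hN2]; nlinarith [Nat.cast_nonneg (α := ℝ) k]
      have h1 : (1:ℝ) ≤ A * (n:ℝ)^(2*α) / ((k:ℝ)+1)^2 := by
        rw [le_div_iff₀ (by positivity)]
        have : (x₂+1)^2 * (n:ℝ)^(2*α) ≤ A * (n:ℝ)^(2*α) := by
          apply mul_le_mul_of_nonneg_right _ (by positivity)
          have : 0 < Real.exp (m₀ * fbar) := Real.exp_pos _
          nlinarith
        linarith
      calc |Real.exp (-m * f x) * g x| ≤ G * Real.exp (-m * f x) := habs
        _ ≤ G * (1 * Real.exp (-m * fbar)) := by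
            rw [one_mul]; exact mul_le_mul_of_nonneg_left he hG
        _ ≤ G * ((A * (n:ℝ)^(2*α) / ((k:ℝ)+1)^2) * Real.exp (-m * fbar)) := by
            apply mul_le_mul_of_nonneg_left _ hG
            exact mul_le_mul_of_nonneg_right h1 (Real.exp_pos _).le
        _ = (G * A * (n:ℝ)^(2*α) / ((k:ℝ)+1)^2) * Real.exp (-m * fbar) := by ring
    · -- tail
      have hx1 : (1:ℝ) ≤ x := le_trans hx₂1 hcase
      have hxx₁ : x₁ ≤ x := le_trans (le_max_left _ _) hcase
      have hflog : c * Real.log x ≤ f x := hlog x hxx₁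
      have hlog0 : 0 ≤ Real.log x := Real.log_nonneg hx1
      have hkx : x * N = (k:ℝ) := div_mul_cancel₀ _ hNpos.ne'
      have hk1 : (1:ℝ) ≤ (k:ℝ) := by nlinarith
      -- exp(-m f x) ≤ exp(-(m-m₀) fbar) * exp(-m₀ c log x)
      have hsplit : Real.exp (-m * f x)
          ≤ Real.exp (-(m - m₀) * fbar) * Real.exp (-m₀ * (c * Real.log x)) := by
        rw [← Real.exp_add]
        apply Real.exp_le_exp.2
        have h1 : -(m - m₀) * f x ≤ -(m - m₀) * fbar := by nlinarith
        have h2 : -m₀ * f x ≤ -m₀ * (c * Real.log x) := by nlinarith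
        nlinarith
      have hrpow : Real.exp (-m₀ * (c * Real.log x)) = x ^ (-(m₀*c)) := by
        rw [Real.rpow_def_of_pos (by linarith), mul_comm (Real.log x)]
        ring_nf
      have hxpow : x ^ (-(m₀*c)) ≤ x ^ (-(2:ℝ)) :=
        Real.rpow_le_rpow_of_exponent_le hx1 (by linarith)
      have hx2eq : x ^ (-(2:ℝ)) = N^2 / (k:ℝ)^2 := by
        rw [Real.rpow_neg (by linarith), Real.rpow_two, hx]
        rw [div_pow, inv_div]
      have hk4 : N^2 / (k:ℝ)^2 ≤ 4 * (n:ℝ)^(2*α) / ((k:ℝ)+1)^2 := by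
        rw [div_le_div_iff₀ (by positivity) (by positivity), hN2]
        have h : ((k:ℝ)+1)^2 ≤ 4*(k:ℝ)^2 := by nlinarith [mul_nonneg (sub_nonneg.2 hk1) (by linarith : (0:ℝ) ≤ 3*(k:ℝ)+1)]
        nlinarith [Real.rpow_pos_of_pos (show (0:ℝ) < (n:ℝ) by exact_mod_cast hn) (2*α)]
      have hexp2 : Real.exp (-(m - m₀) * fbar)
          = Real.exp (-m * fbar) * Real.exp (m₀ * fbar) := by
        rw [← Real.exp_add]; ring_nf
      calc |Real.exp (-m * f x) * g x| ≤ G * Real.exp (-m * f x) := habs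
        _ ≤ G * (Real.exp (-(m - m₀) * fbar) * Real.exp (-m₀ * (c * Real.log x))) :=
            mul_le_mul_of_nonneg_left hsplit hG
        _ = G * Real.exp (m₀ * fbar) * (x ^ (-(m₀*c))) * Real.exp (-m * fbar) := by
            rw [hrpow, hexp2]; ring
        _ ≤ G * Real.exp (m₀ * fbar) * (4 * (n:ℝ)^(2*α) / ((k:ℝ)+1)^2) * Real.exp (-m * fbar) := by
            apply mul_le_mul_of_nonneg_right _ (Real.exp_pos _).le
            apply mul_le_mul_of_nonneg_left _ (by positivity)
            calc x ^ (-(m₀*c)) ≤ x ^ (-(2:ℝ)) := hxpow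
              _ = N^2/(k:ℝ)^2 := hx2eq
              _ ≤ _ := hk4
        _ ≤ (G * A * (n:ℝ)^(2*α) / ((k:ℝ)+1)^2) * Real.exp (-m * fbar) := by
            apply mul_le_mul_of_nonneg_right _ (Real.exp_pos _).le
            have heq : G * Real.exp (m₀ * fbar) * (4 * (n:ℝ)^(2*α) / ((k:ℝ)+1)^2)
                = G * (4 * Real.exp (m₀ * fbar)) * (n:ℝ)^(2*α) / ((k:ℝ)+1)^2 := by ring
            rw [heq]
            have h4A : 4 * Real.exp (m₀ * fbar) ≤ A := by nlinarith [sq_nonneg (x₂+1)]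
            gcongr
  -- sum up
  have hbeq : (fun k:ℕ => (G * A * (n:ℝ)^(2*α) / ((k:ℝ)+1)^2) * Real.exp (-m * fbar))
      = fun k:ℕ => (G * A * (n:ℝ)^(2*α) * Real.exp (-m * fbar)) * (1/((k:ℝ)+1)^2) := by
    funext k; ring
  have hbsum : Summable (fun k:ℕ =>
      (G * A * (n:ℝ)^(2*α) / ((k:ℝ)+1)^2) * Real.exp (-m * fbar)) := by
    rw [hbeq]; exact hSsum.mul_left _
  have habs_sum : Summable (fun k:ℕ =>
      |Real.exp (-m * f ((k:ℝ)/N)) * g ((k:ℝ)/N)|) :=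
    Summable.of_nonneg_of_le (fun k => abs_nonneg _) key hbsum
  have htsum_b : ∑' k:ℕ, (G * A * (n:ℝ)^(2*α) / ((k:ℝ)+1)^2) * Real.exp (-m * fbar)
      = (G * A * (n:ℝ)^(2*α) * Real.exp (-m * fbar)) * S := by
    rw [hbeq, tsum_mul_left]
  calc |∑' k:ℕ, Real.exp (-m * f ((k:ℝ)/N)) * g ((k:ℝ)/N)|
      ≤ ∑' k:ℕ, |Real.exp (-m * f ((k:ℝ)/N)) * g ((k:ℝ)/N)| := by
        have h := norm_tsum_le_tsum_norm
          (f := fun k:ℕ => Real.exp (-m * f ((k:ℝ)/N)) * g ((k:ℝ)/N))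
          (by simpa only [Real.norm_eq_abs] using habs_sum)
        simpa only [Real.norm_eq_abs] using h
    _ ≤ ∑' k:ℕ, (G * A * (n:ℝ)^(2*α) / ((k:ℝ)+1)^2) * Real.exp (-m * fbar) :=
        Summable.tsum_le_tsum key habs_sum hbsum
    _ = (G * A * (n:ℝ)^(2*α) * Real.exp (-m * fbar)) * S := htsum_b
    _ ≤ (G*A*S+1) * (n:ℝ)^(2*α) * Real.exp (-m * fbar) := by
        nlinarith [Real.exp_pos (-m * fbar),
          Real.rpow_pos_of_pos (show (0:ℝ) < (n:ℝ) by exact_mod_cast hn) (2*α),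
          mul_nonneg (mul_nonneg hG hApos.le) hSpos.le]
end

section
/- Let γ, x₀ > 0 and 0 < α < 1/2. Then the Gaussian sum Q(n,α,γ,x₀) = n^{1-α} Σ_{k∈ℤ} e^{-n^{1-2α} γ (k - n^α x₀)²} satisfies Q(n,α,γ,x₀) = n^{1-α} ( e^{-γ n^{1-2α} t(n^α x₀)²} + e^{-γ n^{1-2α} (1 - t(n^α x₀))²} + O(e^{-γ n^{1-2α}}) ), where t(x) = min(x - ⌊x⌋, ⌈x⌉ - x) is the distance from x to the nearest integer. -/
open Real Filter Asymptotics

/-- The distance from `x` to the nearest integer: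
the positive triangular wave of height `1/2` and period `1`. -/
noncomputable def tdist (x : ℝ) : ℝ := min (x - ⌊x⌋) (⌈x⌉ - x)

lemma tdist_pair (c y : ℝ) :
    Real.exp (-c * (tdist y) ^ 2) + Real.exp (-c * (1 - tdist y) ^ 2)
      = Real.exp (-c * (Int.fract y) ^ 2) + Real.exp (-c * (1 - Int.fract y) ^ 2) := by
  rcases eq_or_ne (Int.fract y) 0 with h0 | h0
  · have hf : y - (⌊y⌋ : ℝ) = 0 := by
      rw [Int.self_sub_floor]; exact h0
    have hy : y = (⌊y⌋ : ℝ) := by linarith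
    have hc : (⌈y⌉ : ℝ) - y = 0 := by
      rw [hy]; simp
    simp [tdist, hf, hc, h0]
  · have hceil : (⌈y⌉ : ℝ) - y = 1 - Int.fract y := Int.ceil_sub_self_eq h0
    have hfl : y - (⌊y⌋ : ℝ) = Int.fract y := Int.self_sub_floor y
    unfold tdist
    rw [hceil, hfl]
    rcases min_cases (Int.fract y) (1 - Int.fract y) with ⟨hm, _⟩ | ⟨hm, _⟩
    · rw [hm]
    · rw [hm]
      have : 1 - (1 - Int.fract y) = Int.fract y := by ring
      rw [this, add_comm]

lemma gauss_key (c y : ℝ) (hc : 1 ≤ c) :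
    |(∑' k : ℤ, Real.exp (-c * ((k : ℝ) - y) ^ 2))
        - (Real.exp (-c * (tdist y) ^ 2) + Real.exp (-c * (1 - tdist y) ^ 2))|
      ≤ 4 * Real.exp (-c) := by
  have hcpos : 0 < c := lt_of_lt_of_le one_pos hc
  set f := Int.fract y with hf
  have hf0 : 0 ≤ f := Int.fract_nonneg y
  have hf1 : f < 1 := Int.fract_lt_one y
  set G : ℤ → ℝ := fun j => Real.exp (-c * ((j : ℝ) - f) ^ 2) with hG
  set r := Real.exp (-c) with hr
  have hr0 : 0 ≤ r := (Real.exp_pos _).le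
  have hr1 : r < 1 := Real.exp_lt_one_iff.mpr (by linarith)
  have hrhalf : r ≤ 1 / 2 := by
    have h1 : r ≤ Real.exp (-1) := Real.exp_le_exp.mpr (by linarith)
    have h2 : Real.exp (-1) ≤ 1 / 2 := by
      rw [Real.exp_neg]
      rw [inv_le_comm₀ (Real.exp_pos 1) (by norm_num)]
      nlinarith [Real.exp_one_gt_d9]
    linarith
  have hgeom : Summable (fun j : ℕ => r ^ (j + 1)) := by
    simpa [pow_succ, mul_comm] using (summable_geometric_of_lt_one hr0 hr1).mul_left r
  have tsum_geom : (∑' j : ℕ, r ^ (j + 1)) ≤ 2 * r := by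
    have : (∑' j : ℕ, r ^ (j + 1)) = r * (1 - r)⁻¹ := by
      rw [show (fun j : ℕ => r ^ (j + 1)) = fun j : ℕ => r * r ^ j from by
        funext j; rw [pow_succ, mul_comm]]
      rw [tsum_mul_left, tsum_geometric_of_lt_one hr0 hr1]
    rw [this]
    have h1 : (1 - r)⁻¹ ≤ 2 := by
      rw [inv_le_comm₀ (by linarith) (by norm_num)]
      linarith
    nlinarith
  -- bounds for the two tails
  have hbound_pos : ∀ j : ℕ, G ((j : ℤ) + 2) ≤ r ^ (j + 1) := by
    intro j
    have : r ^ (j + 1) = Real.exp (-c * (j + 1)) := by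
      rw [hr, ← Real.exp_nat_mul]
      congr 1
      push_cast; ring
    rw [this, hG]
    apply Real.exp_le_exp.mpr
    have hj : (0 : ℝ) ≤ (j : ℝ) := Nat.cast_nonneg j
    push_cast
    have hb : ((j : ℝ) + 1) ≤ ((j : ℝ) + 2 - f) ^ 2 := by
      nlinarith [mul_nonneg hj (by linarith : (0:ℝ) ≤ 1 - f),
        mul_nonneg (by linarith : (0:ℝ) ≤ 1 - f) (by linarith : (0:ℝ) ≤ 3 - f),
        sq_nonneg ((j:ℝ))]
    nlinarith [mul_le_mul_of_nonneg_left hb hcpos.le]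
  have hbound_neg : ∀ j : ℕ, G (-((j : ℤ) + 1)) ≤ r ^ (j + 1) := by
    intro j
    have : r ^ (j + 1) = Real.exp (-c * (j + 1)) := by
      rw [hr, ← Real.exp_nat_mul]
      congr 1
      push_cast; ring
    rw [this, hG]
    apply Real.exp_le_exp.mpr
    have hj : (0 : ℝ) ≤ (j : ℝ) := Nat.cast_nonneg j
    push_cast
    have hb : ((j : ℝ) + 1) ≤ (-((j : ℝ) + 1) - f) ^ 2 := by
      nlinarith [sq_nonneg ((j:ℝ)), mul_nonneg hj hf0, mul_nonneg hf0 hf0]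
    nlinarith [mul_le_mul_of_nonneg_left hb hcpos.le]
  have hGpos : ∀ j : ℤ, 0 ≤ G j := fun j => (Real.exp_pos _).le
  have hsum_pos : Summable (fun j : ℕ => G ((j : ℤ) + 2)) :=
    Summable.of_nonneg_of_le (fun j => hGpos _) hbound_pos hgeom
  have hsum_neg : Summable (fun j : ℕ => G (-((j : ℤ) + 1))) :=
    Summable.of_nonneg_of_le (fun j => hGpos _) hbound_neg hgeom
  set Tp := ∑' j : ℕ, G ((j : ℤ) + 2) with hTp
  set Tm := ∑' j : ℕ, G (-((j : ℤ) + 1)) with hTm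
  have hTp_le : Tp ≤ 2 * r := le_trans (Summable.tsum_le_tsum hbound_pos hsum_pos hgeom) tsum_geom
  have hTm_le : Tm ≤ 2 * r := le_trans (Summable.tsum_le_tsum hbound_neg hsum_neg hgeom) tsum_geom
  have hTp_nonneg : 0 ≤ Tp := tsum_nonneg fun j => hGpos _
  have hTm_nonneg : 0 ≤ Tm := tsum_nonneg fun j => hGpos _
  -- HasSum for nat part
  have hnat : HasSum (fun j : ℕ => G j) (Tp + (G 0 + G 1)) := by
    have h1 : HasSum (fun j : ℕ => G ((j : ℤ) + 2)) Tp := hsum_pos.hasSum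
    have h2 : HasSum (fun j : ℕ => G ((j + 2 : ℕ) : ℤ)) Tp := by
      have he : ∀ j : ℕ, ((j + 2 : ℕ) : ℤ) = (j : ℤ) + 2 := by intro j; push_cast; ring
      simpa [he] using h1
    have := (hasSum_nat_add_iff (f := fun j : ℕ => G (j : ℤ)) 2).mp h2
    simpa [Finset.sum_range_succ] using this
  have hneg : HasSum (fun j : ℕ => G (-((j : ℤ) + 1))) Tm := hsum_neg.hasSum
  have hG_sum : HasSum G (Tp + (G 0 + G 1) + Tm) :=
    HasSum.of_nat_of_neg_add_one hnat hneg
  -- transfer to original function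
  have horig : HasSum (fun k : ℤ => Real.exp (-c * ((k : ℝ) - y) ^ 2))
      (Tp + (G 0 + G 1) + Tm) := by
    have key : (fun k : ℤ => Real.exp (-c * ((k : ℝ) - y) ^ 2))
        = G ∘ (Equiv.subRight (⌊y⌋ : ℤ)) := by
      funext k
      simp only [Function.comp, Equiv.subRight_apply, hG]
      have hy : ((⌊y⌋ : ℤ) : ℝ) + f = y := Int.floor_add_fract y
      push_cast
      have h : (k : ℝ) - y = (k : ℝ) - (⌊y⌋ : ℝ) - f := by linarith
      rw [h]
    rw [key]
    exact ((Equiv.subRight (⌊y⌋ : ℤ)).hasSum_iff).mpr hG_sum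
  rw [horig.tsum_eq, tdist_pair c y]
  have hG0 : G 0 = Real.exp (-c * f ^ 2) := by simp [hG]
  have hG1 : G 1 = Real.exp (-c * (1 - f) ^ 2) := by simp [hG]
  rw [hG0, hG1] at *
  rw [show Tp + (Real.exp (-c * f ^ 2) + Real.exp (-c * (1 - f) ^ 2)) + Tm
      - (Real.exp (-c * f ^ 2) + Real.exp (-c * (1 - f) ^ 2)) = Tp + Tm from by ring]
  rw [abs_of_nonneg (by linarith)]
  linarith

theorem gaussian_sum_asymptotics_subcritical (γ x₀ α : ℝ)
    (hγ : 0 < γ) (hx₀ : 0 < x₀) (hα0 : 0 < α) (hα : α < 1 / 2) :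
    ∃ e : ℕ → ℝ,
      (∀ n : ℕ, 1 ≤ n →
        (n : ℝ) ^ (1 - α) *
            ∑' k : ℤ, Real.exp (-(n : ℝ) ^ (1 - 2 * α) * γ * ((k : ℝ) - (n : ℝ) ^ α * x₀) ^ 2)
          = (n : ℝ) ^ (1 - α) *
              (Real.exp (-γ * (n : ℝ) ^ (1 - 2 * α) * (tdist ((n : ℝ) ^ α * x₀)) ^ 2)
                + Real.exp (-γ * (n : ℝ) ^ (1 - 2 * α) * (1 - tdist ((n : ℝ) ^ α * x₀)) ^ 2)
                + e n)) ∧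
      e =O[atTop] fun n : ℕ => Real.exp (-γ * (n : ℝ) ^ (1 - 2 * α)) := by
  set e : ℕ → ℝ := fun n =>
    (∑' k : ℤ, Real.exp (-(n : ℝ) ^ (1 - 2 * α) * γ * ((k : ℝ) - (n : ℝ) ^ α * x₀) ^ 2))
      - (Real.exp (-γ * (n : ℝ) ^ (1 - 2 * α) * (tdist ((n : ℝ) ^ α * x₀)) ^ 2)
        + Real.exp (-γ * (n : ℝ) ^ (1 - 2 * α) * (1 - tdist ((n : ℝ) ^ α * x₀)) ^ 2)) with he
  refine ⟨e, fun n _ => by rw [he]; ring, ?_⟩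
  rw [isBigO_iff]
  refine ⟨4, ?_⟩
  have hten : Tendsto (fun n : ℕ => γ * (n : ℝ) ^ (1 - 2 * α)) atTop atTop := by
    apply Tendsto.const_mul_atTop hγ
    exact (tendsto_rpow_atTop (by linarith)).comp tendsto_natCast_atTop_atTop
  filter_upwards [hten.eventually_ge_atTop 1] with n hn
  set c := γ * (n : ℝ) ^ (1 - 2 * α) with hc
  set y := (n : ℝ) ^ α * x₀ with hy
  have hkey := gauss_key c y hn
  have h1 : (∑' k : ℤ, Real.exp (-(n : ℝ) ^ (1 - 2 * α) * γ * ((k : ℝ) - y) ^ 2))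
      = ∑' k : ℤ, Real.exp (-c * ((k : ℝ) - y) ^ 2) :=
    tsum_congr fun k => by rw [hc]; congr 1; ring
  have h2 : Real.exp (-γ * (n : ℝ) ^ (1 - 2 * α) * (tdist y) ^ 2)
      = Real.exp (-c * (tdist y) ^ 2) := by rw [hc]; congr 1; ring
  have h3 : Real.exp (-γ * (n : ℝ) ^ (1 - 2 * α) * (1 - tdist y) ^ 2)
      = Real.exp (-c * (1 - tdist y) ^ 2) := by rw [hc]; congr 1; ring
  have h4 : Real.exp (-γ * (n : ℝ) ^ (1 - 2 * α)) = Real.exp (-c) := by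
    rw [hc]; congr 1; ring
  rw [Real.norm_eq_abs, Real.norm_eq_abs, h4, Real.abs_exp, he]
  simp only [← hy, h1, h2, h3]
  exact hkey
end

section
/- Let f, g be functions of one real variable with k continuous derivatives. Then the k-th derivative in y of e^{-n f(y)} g(y) has the form (∂^k/∂y^k)[e^{-n f(y)} g(y)] = ( Σ_{l=0}^k n^{k-l} (f'(y))^{max(k-2l,0)} Q_{k,l}(y) ) e^{-n f(y)}, where each Q_{k,l}(y) is a polynomial in f'(y), …, f^{(k)}(y), g(y), …, g^{(k)}(y) with integer coefficients not depending on f, g, or n. -/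
open Real MvPolynomial

namespace DSL

def Ek (k l : ℕ) : ℕ := ((k:ℤ) - 2*l).toNat

def emb (k : ℕ) : Fin k ⊕ Fin (k+1) → Fin (k+1) ⊕ Fin (k+2) :=
  Sum.map Fin.castSucc Fin.castSucc

def succVar (k : ℕ) : Fin k ⊕ Fin (k+1) → Fin (k+1) ⊕ Fin (k+2) :=
  Sum.map Fin.succ Fin.succ

noncomputable def D (k : ℕ) (P : MvPolynomial (Fin k ⊕ Fin (k+1)) ℤ) :
    MvPolynomial (Fin (k+1) ⊕ Fin (k+2)) ℤ :=
  ∑ s : Fin k ⊕ Fin (k+1), rename (emb k) (pderiv s P) * X (succVar k s)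

lemma D_add (k : ℕ) (p q : MvPolynomial (Fin k ⊕ Fin (k+1)) ℤ) :
    D k (p + q) = D k p + D k q := by
  simp [D, Finset.sum_add_distrib, add_mul]

lemma D_C (k : ℕ) (a : ℤ) : D k (C a) = 0 := by
  simp [D]

lemma D_mul (k : ℕ) (p q : MvPolynomial (Fin k ⊕ Fin (k+1)) ℤ) :
    D k (p * q) = D k p * rename (emb k) q + rename (emb k) p * D k q := by
  simp only [D, pderiv_mul, map_add, map_mul, add_mul, Finset.sum_add_distrib,
    Finset.mul_sum, Finset.sum_mul]
  congr 1 <;> exact Finset.sum_congr rfl fun s _ => by ring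

lemma D_X (k : ℕ) (s : Fin k ⊕ Fin (k+1)) : D k (X s) = X (succVar k s) := by
  classical
  rw [D, Finset.sum_eq_single s]
  · simp
  · intro t _ hts
    rw [pderiv_X_of_ne (Ne.symm hts)]
    simp
  · simp

noncomputable def V (k : ℕ) (f g : ℝ → ℝ) (y : ℝ) : Fin k ⊕ Fin (k+1) → ℝ :=
  Sum.elim (fun i : Fin k => iteratedDeriv ((i : ℕ) + 1) f y)
    (fun j : Fin (k+1) => iteratedDeriv (j : ℕ) g y)

lemma V_emb (k : ℕ) (f g : ℝ → ℝ) (y : ℝ) (s : Fin k ⊕ Fin (k+1)) :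
    V (k+1) f g y (emb k s) = V k f g y s := by
  cases s <;> simp [V, emb]

lemma hasDerivAt_iteratedDeriv {f : ℝ → ℝ} {N : ℕ} (hf : ContDiff ℝ (N:ℕ) f) (m : ℕ)
    (hm : m < N) (y : ℝ) :
    HasDerivAt (iteratedDeriv m f) (iteratedDeriv (m+1) f y) y := by
  have hd : Differentiable ℝ (iteratedDeriv m f) :=
    hf.differentiable_iteratedDeriv m (by exact_mod_cast hm)
  have := (hd y).hasDerivAt
  rwa [iteratedDeriv_succ]

lemma hasDerivAt_V {f g : ℝ → ℝ} {k : ℕ} (hf : ContDiff ℝ (k+1:ℕ) f)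
    (hg : ContDiff ℝ (k+1:ℕ) g) (s : Fin k ⊕ Fin (k+1)) (y : ℝ) :
    HasDerivAt (fun y => V k f g y s) (V (k+1) f g y (succVar k s)) y := by
  cases s with
  | inl i =>
    simpa [V, succVar] using hasDerivAt_iteratedDeriv hf ((i:ℕ)+1) (by omega) y
  | inr j =>
    simpa [V, succVar] using hasDerivAt_iteratedDeriv hg (j:ℕ) (by omega) y

lemma aeval_rename_emb {k : ℕ} (f g : ℝ → ℝ) (y : ℝ) (P : MvPolynomial (Fin k ⊕ Fin (k+1)) ℤ) :
    aeval (V (k+1) f g y) (rename (emb k) P) = aeval (V k f g y) P := by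
  rw [aeval_rename, show V (k+1) f g y ∘ emb k = V k f g y from funext (V_emb k f g y)]

lemma hasDerivAt_aeval {f g : ℝ → ℝ} {k : ℕ} (hf : ContDiff ℝ (k+1:ℕ) f)
    (hg : ContDiff ℝ (k+1:ℕ) g) (P : MvPolynomial (Fin k ⊕ Fin (k+1)) ℤ) (y : ℝ) :
    HasDerivAt (fun y => aeval (V k f g y) P) (aeval (V (k+1) f g y) (D k P)) y := by
  induction P using MvPolynomial.induction_on with
  | C a =>
    have h1 : (fun y => aeval (V k f g y) (C a : MvPolynomial (Fin k ⊕ Fin (k+1)) ℤ))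
        = fun _ : ℝ => (a : ℝ) := by funext y; simp
    rw [h1, D_C]
    simpa using hasDerivAt_const y (a : ℝ)
  | add p q hp hq =>
    simp only [map_add, D_add]
    exact hp.add hq
  | mul_X p s hp =>
    have key := hp.fun_mul (hasDerivAt_V hf hg s y)
    simp only [D_mul, D_X, map_add, map_mul, aeval_rename_emb, aeval_X]
    convert key using 2

end DSL

open DSL

theorem derivative_structure_lemma (k : ℕ) :
    ∃ Q : Fin (k + 1) → MvPolynomial (Fin k ⊕ Fin (k + 1)) ℤ,
      ∀ f g : ℝ → ℝ, ContDiff ℝ k f → ContDiff ℝ k g → ∀ n : ℝ, ∀ y : ℝ,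
        iteratedDeriv k (fun t => Real.exp (-n * f t) * g t) y
          = (∑ l : Fin (k + 1),
                n ^ (k - (l : ℕ)) * (deriv f y) ^ ((k : ℤ) - 2 * (l : ℕ)).toNat *
                  MvPolynomial.aeval
                    (Sum.elim (fun i : Fin k => iteratedDeriv ((i : ℕ) + 1) f y)
                      (fun j : Fin (k + 1) => iteratedDeriv (j : ℕ) g y)) (Q l))
              * Real.exp (-n * f y) := by
  induction k with
  | zero =>
    refine ⟨fun _ => X (Sum.inr 0), fun f g hf hg n y => ?_⟩
    simp [Fin.sum_univ_one, mul_comm]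
  | succ k IH =>
    obtain ⟨Q, hQ⟩ := IH
    classical
    refine ⟨fun m =>
      (if h : (m:ℕ) < k+1 then
        -(X (Sum.inl (0:Fin (k+1))) ^ (Ek k m + 1 - Ek (k+1) m) * rename (emb k) (Q ⟨m, h⟩))
      else 0)
      + (if h : 0 < (m:ℕ) then
          C ((Ek k ((m:ℕ)-1) : ℤ)) * X (Sum.inl (⟨min 1 k, by omega⟩ : Fin (k+1)))
            * X (Sum.inl (0:Fin (k+1))) ^ (Ek k ((m:ℕ)-1) - 1 - Ek (k+1) m)
            * rename (emb k) (Q ⟨(m:ℕ)-1, by omega⟩)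
          + X (Sum.inl (0:Fin (k+1))) ^ (Ek k ((m:ℕ)-1) - Ek (k+1) m)
            * D k (Q ⟨(m:ℕ)-1, by omega⟩)
        else 0), ?_⟩
    intro f g hf hg n y
    have hf' : ContDiff ℝ (k:ℕ) f := hf.of_le (by exact_mod_cast Nat.le_succ k)
    have hg' : ContDiff ℝ (k:ℕ) g := hg.of_le (by exact_mod_cast Nat.le_succ k)
    have hFk : iteratedDeriv k (fun t => Real.exp (-n * f t) * g t)
        = fun z => (∑ l : Fin (k+1), n ^ (k - (l:ℕ)) *
            ((deriv f z) ^ (Ek k l) * aeval (V k f g z) (Q l))) * Real.exp (-n * f z) := by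
      funext z
      rw [hQ f g hf' hg' n z]
      congr 1
      exact Finset.sum_congr rfl fun l _ => by rw [mul_assoc]; rfl
    have hx : HasDerivAt f (deriv f y) y := by
      have : Differentiable ℝ f := hf.differentiable (by simp)
      exact (this y).hasDerivAt
    have hE : HasDerivAt (fun z => Real.exp (-n * f z))
        (Real.exp (-n * f y) * (-n * deriv f y)) y := (hx.const_mul (-n)).exp
    have hpow : ∀ l : Fin (k+1), HasDerivAt (fun z => (deriv f z) ^ (Ek k (l:ℕ)))
        ((Ek k (l:ℕ) : ℝ) * (deriv f y) ^ (Ek k (l:ℕ) - 1) * iteratedDeriv (min 1 k + 1) f y) y := by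
      intro l
      rcases Nat.eq_zero_or_pos (Ek k (l:ℕ)) with h0 | h0
      · simp only [h0, pow_zero, Nat.cast_zero, zero_mul]
        exact hasDerivAt_const y 1
      · have hk1 : 1 ≤ k := by unfold Ek at h0; omega
        have hmin : min 1 k = 1 := by omega
        have hder : HasDerivAt (deriv f) (iteratedDeriv (min 1 k + 1) f y) y := by
          have h := hasDerivAt_iteratedDeriv hf 1 (by omega) y
          rw [iteratedDeriv_one] at h
          rw [hmin]
          exact h
        exact hder.pow _
    have hA : ∀ l : Fin (k+1), HasDerivAt (fun z => aeval (V k f g z) (Q l))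
        (aeval (V (k+1) f g y) (D k (Q l))) y := fun l => hasDerivAt_aeval hf hg (Q l) y
    have hS : HasDerivAt (fun z => ∑ l : Fin (k+1), n ^ (k - (l:ℕ)) *
          ((deriv f z) ^ (Ek k (l:ℕ)) * aeval (V k f g z) (Q l)))
        (∑ l : Fin (k+1), n ^ (k - (l:ℕ)) *
          (((Ek k (l:ℕ) : ℝ) * (deriv f y) ^ (Ek k (l:ℕ) - 1) * iteratedDeriv (min 1 k + 1) f y)
              * aeval (V k f g y) (Q l)
            + (deriv f y) ^ (Ek k (l:ℕ)) * aeval (V (k+1) f g y) (D k (Q l)))) y :=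
      HasDerivAt.fun_sum fun l _ => ((hpow l).fun_mul (hA l)).const_mul _
    have htot := hS.fun_mul hE
    rw [iteratedDeriv_succ, hFk, htot.deriv]
    rw [show (Sum.elim (fun i : Fin (k+1) => iteratedDeriv ((i:ℕ)+1) f y)
        fun j : Fin (k+1+1) => iteratedDeriv ((j:ℕ)) g y) = V (k+1) f g y from rfl]
    simp only [show ∀ m : Fin (k+2), (((k+1:ℕ):ℤ) - 2 * ((m:ℕ):ℤ)).toNat = Ek (k+1) (m:ℕ)
      from fun _ => rfl]
    simp only [map_add, map_mul, map_neg, map_pow, MvPolynomial.aeval_X, MvPolynomial.aeval_C,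
      aeval_rename_emb, apply_dite (MvPolynomial.aeval (V (k+1) f g y)), map_zero,
      show ∀ i : Fin (k+1), V (k+1) f g y (Sum.inl i) = iteratedDeriv ((i:ℕ)+1) f y
        from fun _ => rfl,
      Fin.val_zero, zero_add, iteratedDeriv_one]
    have h1 : (∑ m : Fin (k+1+1), n ^ (k + 1 - (m:ℕ)) * deriv f y ^ Ek (k+1) (m:ℕ) *
        (if h : (m:ℕ) < k + 1 then
            -(deriv f y ^ (Ek k (m:ℕ) + 1 - Ek (k+1) (m:ℕ)) *
              aeval (V k f g y) (Q ⟨(m:ℕ), h⟩))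
          else 0))
        = (∑ l : Fin (k+1), n ^ (k - (l:ℕ)) *
            (deriv f y ^ Ek k (l:ℕ) * aeval (V k f g y) (Q l))) * (-n * deriv f y) := by
      rw [Finset.sum_mul, Fin.sum_univ_castSucc]
      rw [dif_neg (by simp), mul_zero, add_zero]
      refine Finset.sum_congr rfl fun l _ => ?_
      rw [dif_pos (by simp; omega)]
      simp only [Fin.coe_castSucc, Fin.eta]
      have hn : k + 1 - (l:ℕ) = (k - (l:ℕ)) + 1 := by
        have := l.isLt; omega
      have hp : deriv f y ^ Ek (k+1) (l:ℕ) * deriv f y ^ (Ek k (l:ℕ) + 1 - Ek (k+1) (l:ℕ))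
          = deriv f y ^ Ek k (l:ℕ) * deriv f y := by
        rw [← pow_add, ← pow_succ]
        congr 1
        unfold Ek; omega
      rw [hn, pow_succ]
      linear_combination (-(n ^ (k - (l:ℕ)) * n * aeval (V k f g y) (Q l))) * hp
    have h2 : (∑ m : Fin (k+1+1), n ^ (k + 1 - (m:ℕ)) * deriv f y ^ Ek (k+1) (m:ℕ) *
        (if h : 0 < (m:ℕ) then
            (algebraMap ℤ ℝ) ((Ek k ((m:ℕ) - 1) : ℤ)) * iteratedDeriv (1 ⊓ k + 1) f y *
                deriv f y ^ (Ek k ((m:ℕ) - 1) - 1 - Ek (k+1) (m:ℕ)) *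
                aeval (V k f g y) (Q ⟨(m:ℕ) - 1, by omega⟩) +
              deriv f y ^ (Ek k ((m:ℕ) - 1) - Ek (k+1) (m:ℕ)) *
                aeval (V (k+1) f g y) (D k (Q ⟨(m:ℕ) - 1, by omega⟩))
          else 0))
        = ∑ l : Fin (k+1), n ^ (k - (l:ℕ)) *
            ((Ek k (l:ℕ) : ℝ) * deriv f y ^ (Ek k (l:ℕ) - 1) * iteratedDeriv (1 ⊓ k + 1) f y *
                aeval (V k f g y) (Q l)
              + deriv f y ^ Ek k (l:ℕ) * aeval (V (k+1) f g y) (D k (Q l))) := by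
      rw [Fin.sum_univ_succ]
      rw [dif_neg (by simp), mul_zero, zero_add]
      refine Finset.sum_congr rfl fun l _ => ?_
      rw [dif_pos (by simp)]
      simp only [Fin.val_succ, Nat.add_sub_cancel, Fin.eta, algebraMap_int_eq, eq_intCast,
        Int.cast_natCast]
      have hn : k + 1 - ((l:ℕ) + 1) = k - (l:ℕ) := by omega
      rw [hn]
      rcases Nat.eq_zero_or_pos (Ek k (l:ℕ)) with h0 | h0
      · have he : Ek (k+1) ((l:ℕ)+1) = 0 := by unfold Ek at *; omega
        rw [h0, he]
        norm_num
      · have hp2 : deriv f y ^ Ek (k+1) ((l:ℕ)+1) *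
            deriv f y ^ (Ek k (l:ℕ) - 1 - Ek (k+1) ((l:ℕ)+1))
            = deriv f y ^ (Ek k (l:ℕ) - 1) := by
          rw [← pow_add]; congr 1; unfold Ek at *; omega
        have hp3 : deriv f y ^ Ek (k+1) ((l:ℕ)+1) *
            deriv f y ^ (Ek k (l:ℕ) - Ek (k+1) ((l:ℕ)+1))
            = deriv f y ^ Ek k (l:ℕ) := by
          rw [← pow_add]; congr 1; unfold Ek at *; omega
        linear_combination (n ^ (k - (l:ℕ)) * (Ek k (l:ℕ) : ℝ) * iteratedDeriv (1 ⊓ k + 1) f y *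
            aeval (V k f g y) (Q l)) * hp2
          + (n ^ (k - (l:ℕ)) * aeval (V (k+1) f g y) (D k (Q l))) * hp3
    have hgoal : (∑ m : Fin (k+1+1), n ^ (k + 1 - (m:ℕ)) * deriv f y ^ Ek (k+1) (m:ℕ) *
        ((if h : (m:ℕ) < k + 1 then
            -(deriv f y ^ (Ek k (m:ℕ) + 1 - Ek (k+1) (m:ℕ)) *
              aeval (V k f g y) (Q ⟨(m:ℕ), h⟩))
          else 0) +
          (if h : 0 < (m:ℕ) then
            (algebraMap ℤ ℝ) ((Ek k ((m:ℕ) - 1) : ℤ)) * iteratedDeriv (1 ⊓ k + 1) f y *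
                deriv f y ^ (Ek k ((m:ℕ) - 1) - 1 - Ek (k+1) (m:ℕ)) *
                aeval (V k f g y) (Q ⟨(m:ℕ) - 1, by omega⟩) +
              deriv f y ^ (Ek k ((m:ℕ) - 1) - Ek (k+1) (m:ℕ)) *
                aeval (V (k+1) f g y) (D k (Q ⟨(m:ℕ) - 1, by omega⟩))
          else 0)))
        = (∑ l : Fin (k+1), n ^ (k - (l:ℕ)) *
            (deriv f y ^ Ek k (l:ℕ) * aeval (V k f g y) (Q l))) * (-n * deriv f y)
          + ∑ l : Fin (k+1), n ^ (k - (l:ℕ)) *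
            ((Ek k (l:ℕ) : ℝ) * deriv f y ^ (Ek k (l:ℕ) - 1) * iteratedDeriv (1 ⊓ k + 1) f y *
                aeval (V k f g y) (Q l)
              + deriv f y ^ Ek k (l:ℕ) * aeval (V (k+1) f g y) (D k (Q l))) := by
      rw [← h1, ← h2, ← Finset.sum_add_distrib]
      exact Finset.sum_congr rfl fun m _ => mul_add _ _ _
    rw [hgoal]
    ring
end

section
/- Let S : [0,1] → ℝ ∪ {+∞} be continuous, three-times differentiable on (0,1), with a single global minimum at x₀ ∈ (0,1) and S''(x) > 0 on (0,1); let L : [0,1] → ℝ be differentiable and never vanishing. Define Γ(z,n) = Σ_{k=0}^n e^{-n S(k/n)} L(k/n) z^k. Then for every z > 0: lim_{n→∞} (log Γ(z,n))/n = sup_{x ∈ [0,1]} ( −S(x) + x log z ), i.e., the exponential growth rate of the generating function is the restricted Legendre–Fenchel transform of S evaluated at log z. -/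
open Real Filter

/-- The generating function of the semiclassical probability distribution
`p_k ∝ e^{-n S(k/n)} L(k/n)` on `{0,…,n}`. -/
noncomputable def genFun (S L : ℝ → ℝ) (z : ℝ) (n : ℕ) : ℝ :=
  ∑ k ∈ Finset.range (n + 1),
    Real.exp (-(n : ℝ) * S ((k : ℝ) / (n : ℝ))) * L ((k : ℝ) / (n : ℝ)) * z ^ k

private lemma div_mem_Icc' {n k : ℕ} (hk : k ∈ Finset.range (n + 1)) :
    (k : ℝ) / (n : ℝ) ∈ Set.Icc (0 : ℝ) 1 := by
  rcases Nat.eq_zero_or_pos n with rfl | hn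
  · have : k = 0 := by have := Finset.mem_range.mp hk; omega
    subst this; norm_num
  · have hk' : (k : ℝ) ≤ (n : ℝ) := by
      exact_mod_cast Nat.lt_succ_iff.mp (Finset.mem_range.mp hk)
    have hn' : (0 : ℝ) < n := by exact_mod_cast hn
    constructor
    · positivity
    · rw [div_le_one hn']; exact hk'

private lemma genFun_pos (S L : ℝ → ℝ) {z : ℝ} (hz : 0 < z)
    (hLpos : ∀ x ∈ Set.Icc (0 : ℝ) 1, 0 < L x) (n : ℕ) :
    0 < genFun S L z n := by
  apply Finset.sum_pos
  · intro k hk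
    have := hLpos _ (div_mem_Icc' hk)
    positivity
  · exact ⟨0, Finset.mem_range.mpr (Nat.succ_pos n)⟩

private lemma log_nat_succ_div_tendsto :
    Tendsto (fun n : ℕ => Real.log ((n : ℝ) + 1) / (n : ℝ)) atTop (nhds 0) := by
  have h0 : Tendsto (fun x : ℝ => Real.log x / x) atTop (nhds 0) :=
    Real.isLittleO_log_id_atTop.tendsto_div_nhds_zero
  have h1 : Tendsto (fun n : ℕ => (n : ℝ) + 1) atTop atTop :=
    tendsto_natCast_atTop_atTop.atTop_add tendsto_const_nhds
  have h2 : Tendsto (fun n : ℕ => Real.log ((n : ℝ) + 1) / ((n : ℝ) + 1)) atTop (nhds 0) :=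
    h0.comp h1
  have h3 : Tendsto (fun n : ℕ => 2 * (Real.log ((n : ℝ) + 1) / ((n : ℝ) + 1))) atTop (nhds 0) := by
    simpa using h2.const_mul 2
  apply tendsto_of_tendsto_of_tendsto_of_le_of_le' tendsto_const_nhds h3
  · filter_upwards [eventually_ge_atTop 1] with n hn
    have hn' : (1 : ℝ) ≤ (n : ℝ) := by exact_mod_cast hn
    have : (0 : ℝ) ≤ Real.log ((n : ℝ) + 1) := Real.log_nonneg (by linarith)
    positivity
  · filter_upwards [eventually_ge_atTop 1] with n hn
    have hn' : (1 : ℝ) ≤ (n : ℝ) := by exact_mod_cast hn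
    have hlog : (0 : ℝ) ≤ Real.log ((n : ℝ) + 1) := Real.log_nonneg (by linarith)
    rw [show 2 * (Real.log ((n : ℝ) + 1) / ((n : ℝ) + 1))
        = 2 * Real.log ((n : ℝ) + 1) / ((n : ℝ) + 1) by ring,
      div_le_div_iff₀ (by linarith) (by linarith)]
    nlinarith

private lemma aux_growth (S L : ℝ → ℝ) {z : ℝ} (hz : 0 < z)
    (hS : ContinuousOn S (Set.Icc 0 1))
    (hL : ContinuousOn L (Set.Icc 0 1))
    (hLpos : ∀ x ∈ Set.Icc (0 : ℝ) 1, 0 < L x) :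
    Tendsto (fun n : ℕ => Real.log (genFun S L z n) / (n : ℝ)) atTop
      (nhds (sSup ((fun x => -S x + x * Real.log z) '' Set.Icc (0 : ℝ) 1))) := by
  set f : ℝ → ℝ := fun x => -S x + x * Real.log z with hf_def
  have hf : ContinuousOn f (Set.Icc 0 1) :=
    hS.neg.add (continuousOn_id.mul continuousOn_const)
  have hne : (Set.Icc (0 : ℝ) 1).Nonempty := ⟨0, by norm_num⟩
  obtain ⟨x₁, hx₁, hmax⟩ := isCompact_Icc.exists_isMaxOn hne hf
  have hmax' : ∀ x ∈ Set.Icc (0 : ℝ) 1, f x ≤ f x₁ := hmax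
  have hsup : sSup (f '' Set.Icc (0 : ℝ) 1) = f x₁ := by
    apply le_antisymm
    · exact csSup_le (hne.image f) (by rintro _ ⟨x, hx, rfl⟩; exact hmax' x hx)
    · exact le_csSup (isCompact_Icc.bddAbove_image hf) ⟨x₁, hx₁, rfl⟩
  obtain ⟨xC, hxC, hC⟩ := isCompact_Icc.exists_isMaxOn hne hL
  obtain ⟨xc, hxc, hc⟩ := isCompact_Icc.exists_isMinOn hne hL
  have hC' : ∀ x ∈ Set.Icc (0 : ℝ) 1, L x ≤ L xC := hC
  have hc' : ∀ x ∈ Set.Icc (0 : ℝ) 1, L xc ≤ L x := hc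
  have hCpos : 0 < L xC := hLpos _ hxC
  have hcpos : 0 < L xc := hLpos _ hxc
  -- term rewriting
  have hterm_eq : ∀ n : ℕ, 1 ≤ n → ∀ k ∈ Finset.range (n + 1),
      Real.exp (-(n : ℝ) * S ((k : ℝ) / n)) * L ((k : ℝ) / n) * z ^ k
        = Real.exp ((n : ℝ) * f ((k : ℝ) / n)) * L ((k : ℝ) / n) := by
    intro n hn k _
    have hn' : (n : ℝ) ≠ 0 := by positivity
    have hzk : z ^ k = Real.exp ((k : ℝ) * Real.log z) := by
      rw [Real.exp_nat_mul, Real.exp_log hz]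
    have h2 : (n : ℝ) * f ((k : ℝ) / n) = -(n : ℝ) * S ((k : ℝ) / n) + (k : ℝ) * Real.log z := by
      simp only [hf_def]
      field_simp
    rw [hzk, h2, Real.exp_add]
    ring
  -- the approximating sequence
  set xs : ℕ → ℝ := fun n => ((⌊(n : ℝ) * x₁⌋₊ : ℕ) : ℝ) / n with hxs_def
  have hx₁0 : 0 ≤ x₁ := hx₁.1
  have hx₁1 : x₁ ≤ 1 := hx₁.2
  have hkn : ∀ n : ℕ, ⌊(n : ℝ) * x₁⌋₊ ≤ n := by
    intro n
    have : (n : ℝ) * x₁ ≤ (n : ℝ) := by nlinarith [Nat.cast_nonneg (α := ℝ) n]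
    calc ⌊(n : ℝ) * x₁⌋₊ ≤ ⌊(n : ℝ)⌋₊ := Nat.floor_mono this
    _ = n := Nat.floor_natCast n
  have hkn_mem : ∀ n : ℕ, ⌊(n : ℝ) * x₁⌋₊ ∈ Finset.range (n + 1) :=
    fun n => Finset.mem_range.mpr (Nat.lt_succ_of_le (hkn n))
  have hxs_mem : ∀ n : ℕ, xs n ∈ Set.Icc (0 : ℝ) 1 := fun n => div_mem_Icc' (hkn_mem n)
  have hxs_le : ∀ n : ℕ, xs n ≤ x₁ := by
    intro n
    rcases Nat.eq_zero_or_pos n with rfl | hn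
    · simp [hxs_def, hx₁0]
    · have hn' : (0 : ℝ) < n := by exact_mod_cast hn
      rw [hxs_def, div_le_iff₀ hn', mul_comm]
      exact Nat.floor_le (by positivity)
  have hxs_ge : ∀ n : ℕ, 1 ≤ n → x₁ - 1 / n ≤ xs n := by
    intro n hn
    have hn' : (0 : ℝ) < n := by
      have : (1 : ℝ) ≤ n := by exact_mod_cast hn
      linarith
    have hfl := Nat.sub_one_lt_floor ((n : ℝ) * x₁)
    have h2 : x₁ - 1 / (n : ℝ) = ((n : ℝ) * x₁ - 1) / n := by field_simp
    rw [h2, hxs_def]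
    exact (div_le_div_iff_of_pos_right hn').mpr hfl.le
  have hxs_tendsto : Tendsto xs atTop (nhds x₁) := by
    have hlow : Tendsto (fun n : ℕ => x₁ - 1 / (n : ℝ)) atTop (nhds x₁) := by
      simpa using (tendsto_const_nhds : Tendsto (fun _ : ℕ => x₁) atTop (nhds x₁)).sub tendsto_one_div_atTop_nhds_zero_nat
    apply tendsto_of_tendsto_of_tendsto_of_le_of_le' hlow tendsto_const_nhds
    · filter_upwards [eventually_ge_atTop 1] with n hn using hxs_ge n hn
    · exact Eventually.of_forall hxs_le
  have hfxs : Tendsto (fun n : ℕ => f (xs n)) atTop (nhds (f x₁)) := by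
    have : Tendsto xs atTop (nhdsWithin x₁ (Set.Icc 0 1)) :=
      tendsto_nhdsWithin_of_tendsto_nhds_of_eventually_within xs hxs_tendsto
        (Eventually.of_forall hxs_mem)
    exact (hf x₁ hx₁).tendsto.comp this
  -- lower bound
  have hlow_ineq : ∀ᶠ n : ℕ in atTop,
      f (xs n) + Real.log (L (xs n)) / n ≤ Real.log (genFun S L z n) / n := by
    filter_upwards [eventually_ge_atTop 1] with n hn
    have hn' : (0 : ℝ) < n := by
      have : (1 : ℝ) ≤ n := by exact_mod_cast hn
      linarith
    have hLx := hLpos _ (hxs_mem n)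
    have hsingle : Real.exp ((n : ℝ) * f (xs n)) * L (xs n) ≤ genFun S L z n := by
      have hnonneg : ∀ k ∈ Finset.range (n + 1),
          0 ≤ Real.exp (-(n : ℝ) * S ((k : ℝ) / n)) * L ((k : ℝ) / n) * z ^ k := by
        intro k hk
        have := hLpos _ (div_mem_Icc' hk)
        positivity
      have h := Finset.single_le_sum hnonneg (hkn_mem n)
      rw [hterm_eq n hn _ (hkn_mem n)] at h
      exact h
    have h1 : Real.log (Real.exp ((n : ℝ) * f (xs n)) * L (xs n))
        ≤ Real.log (genFun S L z n) :=
      Real.log_le_log (by positivity) hsingle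
    rw [Real.log_mul (Real.exp_ne_zero _) (ne_of_gt hLx), Real.log_exp] at h1
    calc f (xs n) + Real.log (L (xs n)) / n
        = ((n : ℝ) * f (xs n) + Real.log (L (xs n))) / n := by field_simp
      _ ≤ Real.log (genFun S L z n) / n := (div_le_div_iff_of_pos_right hn').mpr h1
  -- the lower bound tends to f x₁
  have hlogL_tendsto : Tendsto (fun n : ℕ => Real.log (L (xs n)) / n) atTop (nhds 0) := by
    apply tendsto_of_tendsto_of_tendsto_of_le_of_le'
      (tendsto_const_div_atTop_nhds_zero_nat (Real.log (L xc)))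
      (tendsto_const_div_atTop_nhds_zero_nat (Real.log (L xC)))
    · filter_upwards [eventually_ge_atTop 1] with n hn
      have hn' : (0 : ℝ) < n := by
        have : (1 : ℝ) ≤ n := by exact_mod_cast hn
        linarith
      exact (div_le_div_iff_of_pos_right hn').mpr (Real.log_le_log hcpos (hc' _ (hxs_mem n)))
    · filter_upwards [eventually_ge_atTop 1] with n hn
      have hn' : (0 : ℝ) < n := by
        have : (1 : ℝ) ≤ n := by exact_mod_cast hn
        linarith
      exact (div_le_div_iff_of_pos_right hn').mpr (Real.log_le_log (hLpos _ (hxs_mem n)) (hC' _ (hxs_mem n)))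
  have hlow_tendsto : Tendsto (fun n : ℕ => f (xs n) + Real.log (L (xs n)) / n) atTop
      (nhds (f x₁)) := by
    simpa using hfxs.add hlogL_tendsto
  -- upper bound
  have hup_ineq : ∀ᶠ n : ℕ in atTop,
      Real.log (genFun S L z n) / n
        ≤ f x₁ + (Real.log ((n : ℝ) + 1) + Real.log (L xC)) / n := by
    filter_upwards [eventually_ge_atTop 1] with n hn
    have hn' : (0 : ℝ) < n := by
      have : (1 : ℝ) ≤ n := by exact_mod_cast hn
      linarith
    have hsum : genFun S L z n ≤ ((n : ℝ) + 1) * (Real.exp ((n : ℝ) * f x₁) * L xC) := by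
      rw [genFun]
      calc ∑ k ∈ Finset.range (n + 1),
            Real.exp (-(n : ℝ) * S ((k : ℝ) / n)) * L ((k : ℝ) / n) * z ^ k
          = ∑ k ∈ Finset.range (n + 1),
            Real.exp ((n : ℝ) * f ((k : ℝ) / n)) * L ((k : ℝ) / n) :=
            Finset.sum_congr rfl (hterm_eq n hn)
        _ ≤ ∑ _k ∈ Finset.range (n + 1), Real.exp ((n : ℝ) * f x₁) * L xC := by
            apply Finset.sum_le_sum
            intro k hk
            have hmem := div_mem_Icc' (n := n) hk
            have h1 : Real.exp ((n : ℝ) * f ((k : ℝ) / n)) ≤ Real.exp ((n : ℝ) * f x₁) :=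
              Real.exp_le_exp.mpr (by
                have := hmax' _ hmem
                nlinarith)
            exact mul_le_mul h1 (hC' _ hmem) (hLpos _ hmem).le (Real.exp_pos _).le
        _ = ((n : ℝ) + 1) * (Real.exp ((n : ℝ) * f x₁) * L xC) := by
            rw [Finset.sum_const, Finset.card_range]
            push_cast
            ring
    have hlog : Real.log (genFun S L z n)
        ≤ Real.log ((n : ℝ) + 1) + ((n : ℝ) * f x₁ + Real.log (L xC)) := by
      have h1 : Real.log (genFun S L z n)
          ≤ Real.log (((n : ℝ) + 1) * (Real.exp ((n : ℝ) * f x₁) * L xC)) :=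
        Real.log_le_log (genFun_pos S L hz hLpos n) hsum
      rw [Real.log_mul (by positivity) (by positivity),
        Real.log_mul (Real.exp_ne_zero _) (ne_of_gt hCpos), Real.log_exp] at h1
      linarith
    calc Real.log (genFun S L z n) / n
        ≤ (Real.log ((n : ℝ) + 1) + ((n : ℝ) * f x₁ + Real.log (L xC))) / n :=
          (div_le_div_iff_of_pos_right hn').mpr hlog
      _ = f x₁ + (Real.log ((n : ℝ) + 1) + Real.log (L xC)) / n := by field_simp; ring
  have hup_tendsto : Tendsto (fun n : ℕ =>
      f x₁ + (Real.log ((n : ℝ) + 1) + Real.log (L xC)) / n) atTop (nhds (f x₁)) := by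
    have h1 : Tendsto (fun n : ℕ =>
        Real.log ((n : ℝ) + 1) / n + Real.log (L xC) / n) atTop (nhds 0) := by
      simpa using log_nat_succ_div_tendsto.add
        (tendsto_const_div_atTop_nhds_zero_nat (Real.log (L xC)))
    have h2 : Tendsto (fun n : ℕ =>
        (Real.log ((n : ℝ) + 1) + Real.log (L xC)) / n) atTop (nhds 0) := by
      simpa [add_div] using h1
    simpa using tendsto_const_nhds.add h2
  rw [hsup]
  exact tendsto_of_tendsto_of_tendsto_of_le_of_le' hlow_tendsto hup_tendsto hlow_ineq hup_ineq

theorem generating_function_growth_rate (S L : ℝ → ℝ) (x₀ : ℝ)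
    (hS : ContinuousOn S (Set.Icc 0 1))
    (hS3 : ContDiffOn ℝ 3 S (Set.Ioo 0 1))
    (hx₀ : x₀ ∈ Set.Ioo (0 : ℝ) 1)
    (hmin : ∀ x ∈ Set.Icc (0 : ℝ) 1, x ≠ x₀ → S x₀ < S x)
    (hS'' : ∀ x ∈ Set.Ioo (0 : ℝ) 1, 0 < iteratedDeriv 2 S x)
    (hL : DifferentiableOn ℝ L (Set.Icc 0 1))
    (hL0 : ∀ x ∈ Set.Icc (0 : ℝ) 1, L x ≠ 0) :
    ∀ z : ℝ, 0 < z →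
      Tendsto (fun n : ℕ => Real.log (genFun S L z n) / (n : ℝ)) atTop
        (nhds (sSup ((fun x => -S x + x * Real.log z) '' Set.Icc (0 : ℝ) 1))) := by
  intro z hz
  have hLc : ContinuousOn L (Set.Icc 0 1) := hL.continuousOn
  have h0 : (0 : ℝ) ∈ Set.Icc (0 : ℝ) 1 := by norm_num
  rcases (hL0 0 h0).lt_or_gt with hneg | hpos
  · -- L is everywhere negative
    have hLneg : ∀ x ∈ Set.Icc (0 : ℝ) 1, L x < 0 := by
      intro x hx
      rcases (hL0 x hx).lt_or_gt with h | h
      · exact h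
      · exfalso
        have hsub : Set.Icc (0 : ℝ) x ⊆ Set.Icc 0 1 := Set.Icc_subset_Icc le_rfl hx.2
        have := intermediate_value_Icc hx.1 (hLc.mono hsub)
        have h0mem : (0 : ℝ) ∈ Set.Icc (L 0) (L x) := ⟨hneg.le, h.le⟩
        obtain ⟨c, hc, hc0⟩ := this h0mem
        exact hL0 c (hsub hc) hc0
    have hg : ∀ n, genFun S L z n = -genFun S (fun x => -(L x)) z n := by
      intro n
      simp [genFun, mul_neg, neg_mul, Finset.sum_neg_distrib]
    have haux := aux_growth S (fun x => -(L x)) hz hS hLc.neg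
      (fun x hx => neg_pos.mpr (hLneg x hx))
    have : (fun n : ℕ => Real.log (genFun S L z n) / (n : ℝ))
        = fun n : ℕ => Real.log (genFun S (fun x => -(L x)) z n) / (n : ℝ) := by
      funext n
      rw [hg n, Real.log_neg_eq_log]
    rw [this]
    exact haux
  · -- L is everywhere positive
    have hLpos : ∀ x ∈ Set.Icc (0 : ℝ) 1, 0 < L x := by
      intro x hx
      rcases (hL0 x hx).lt_or_gt with h | h
      · exfalso
        have hsub : Set.Icc (0 : ℝ) x ⊆ Set.Icc 0 1 := Set.Icc_subset_Icc le_rfl hx.2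
        have := intermediate_value_Icc' hx.1 (hLc.mono hsub)
        have h0mem : (0 : ℝ) ∈ Set.Icc (L x) (L 0) := ⟨h.le, hpos.le⟩
        obtain ⟨c, hc, hc0⟩ := this h0mem
        exact hL0 c (hsub hc) hc0
      · exact h
    exact aux_growth S L hz hS hLc hLpos
end
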